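/- arXiv:1209.1113 — 2 statements merged into one kernel-verified Lean document; each statement's English description precedes it below -/
import Mathlib

section
/- Let a ∈ (0,1), g < 0, α ∈ (0, √(1-a²)/2), and m(ξ) = √(1 - a² - ag|ξ|^{-1}). Suppose F : ℝ × [0,∞) → ℂ satisfies the Fourier bound e^{αt|ξ|}|F̂(ξ,t)| ≤ μ(ξ) for all t ≥ 0, where μ is a fixed finite positive measure. Then the function I⁻(F_x)(t) = ∫₀ᵗ S_-(t-s) ∂_x F(s) ds, where S_-(t) has Fourier multiplier e^{t(iaξ - m(ξ)|ξ|)}, satisfies e^{αt|ξ|}|𝓕(I⁻(F_x))(ξ,t)| ≤ C(α) μ(ξ) for a constant C(α) independent of F. -/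
open MeasureTheory Complex Real

/-- The multiplier `m(ξ) = √(1 - a² - ag/|ξ|)`. -/
noncomputable def mm (a g ξ : ℝ) : ℝ := Real.sqrt (1 - a ^ 2 - a * g / |ξ|)

/-- Linear estimate for `I⁻(F_x)`: for `a ∈ (0,1)`, `g < 0`, `0 < α < √(1-a²)/2`, there is a
constant `C(α)` (independent of `F`) such that whenever `e^{αt|ξ|}|F̂(ξ,t)| ≤ μ(ξ)` for all
`t ≥ 0` (with `μ` a fixed nonnegative bound), the Fourier transform of
`I⁻(F_x)(t) = ∫₀ᵗ S₋(t-s) ∂ₓF(s) ds` (where `S₋(t)` has multiplier `e^{t(iaξ - m(ξ)|ξ|)}` and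
`∂ₓ` has multiplier `iξ`) satisfies `e^{αt|ξ|}|𝓕(I⁻(F_x))(ξ,t)| ≤ C(α) μ(ξ)`. -/
theorem stmt9 (a g : ℝ) (ha : 0 < a) (ha1 : a < 1) (hg : g < 0)
    (α : ℝ) (hα0 : 0 < α) (hα : α < Real.sqrt (1 - a ^ 2) / 2) :
    ∃ C : ℝ, 0 < C ∧
      ∀ (Fhat : ℝ → ℝ → ℂ) (μ : ℝ → ℝ),
        (∀ ξ t : ℝ, 0 ≤ t → Real.exp (α * t * |ξ|) * ‖Fhat ξ t‖ ≤ μ ξ) →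
        ∀ ξ t : ℝ, 0 ≤ t →
          Real.exp (α * t * |ξ|) *
              ‖∫ s in (0:ℝ)..t,
                  Complex.exp (((t - s : ℝ) : ℂ) *
                      (Complex.I * (a : ℂ) * (ξ : ℂ) - ((mm a g ξ : ℝ) : ℂ) * ((|ξ| : ℝ) : ℂ))) *
                    (Complex.I * (ξ : ℂ)) * Fhat ξ s‖ ≤ C * μ ξ := by
  have h1a : 0 < 1 - a ^ 2 := by nlinarith
  set r := Real.sqrt (1 - a ^ 2) with hr
  have hr0 : 0 < r := Real.sqrt_pos.2 h1a
  refine ⟨2 / r, by positivity, ?_⟩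
  intro Fhat μ hF ξ t ht
  have hμ0 : 0 ≤ μ ξ := le_trans (by positivity) (hF ξ 0 le_rfl)
  by_cases hξ : ξ = 0
  · subst hξ
    simp only [Complex.ofReal_zero, mul_zero, zero_mul, abs_zero, Real.exp_zero, one_mul]
    simp only [mul_zero, zero_mul, intervalIntegral.integral_zero, norm_zero]
    positivity
  have hξa : 0 < |ξ| := abs_pos.2 hξ
  set m := mm a g ξ with hm
  have hmr : r ≤ m := by
    apply Real.sqrt_le_sqrt
    have hdiv : a * g / |ξ| ≤ 0 := div_nonpos_iff.2 (Or.inr ⟨by nlinarith, hξa.le⟩)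
    linarith
  have hmα : r / 2 ≤ m - α := by linarith
  have hmα0 : 0 < m - α := lt_of_lt_of_le (by positivity) hmα
  set b := (m - α) * |ξ| with hb
  have hb0 : 0 < b := mul_pos hmα0 hξa
  set c := -(t * (m * |ξ|)) with hc
  -- pointwise norm bound
  have hnorm : ∀ s ∈ Set.uIoc (0:ℝ) t,
      ‖Complex.exp (((t - s : ℝ) : ℂ) *
          (Complex.I * (a : ℂ) * (ξ : ℂ) - ((m : ℝ) : ℂ) * ((|ξ| : ℝ) : ℂ))) *
        (Complex.I * (ξ : ℂ)) * Fhat ξ s‖ ≤ |ξ| * μ ξ * Real.exp (c + b * s) := by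
    intro s hs
    rw [Set.uIoc_of_le ht] at hs
    have hs0 : 0 ≤ s := hs.1.le
    have hFs : ‖Fhat ξ s‖ ≤ Real.exp (-(α * s * |ξ|)) * μ ξ := by
      have h := hF ξ s hs0
      rw [Real.exp_neg, ← div_eq_inv_mul, le_div_iff₀ (Real.exp_pos _), mul_comm]
      exact h
    have hre : ((((t - s : ℝ) : ℂ) *
        (Complex.I * (a : ℂ) * (ξ : ℂ) - ((m : ℝ) : ℂ) * ((|ξ| : ℝ) : ℂ))).re)
        = (t - s) * (-(m * |ξ|)) := by
      simp [Complex.mul_re]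
    calc ‖Complex.exp (((t - s : ℝ) : ℂ) *
          (Complex.I * (a : ℂ) * (ξ : ℂ) - ((m : ℝ) : ℂ) * ((|ξ| : ℝ) : ℂ))) *
        (Complex.I * (ξ : ℂ)) * Fhat ξ s‖
        = Real.exp ((t - s) * (-(m * |ξ|))) * |ξ| * ‖Fhat ξ s‖ := by
          rw [norm_mul, norm_mul, Complex.norm_exp, hre]
          simp
      _ ≤ Real.exp ((t - s) * (-(m * |ξ|))) * |ξ| * (Real.exp (-(α * s * |ξ|)) * μ ξ) :=
          mul_le_mul_of_nonneg_left hFs (by positivity)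
      _ = |ξ| * μ ξ * Real.exp (c + b * s) := by
          have hE : Real.exp ((t - s) * -(m * |ξ|)) * Real.exp (-(α * s * |ξ|))
              = Real.exp (-(t * (m * |ξ|)) + (m - α) * |ξ| * s) := by
            rw [← Real.exp_add]; congr 1; ring
          rw [hc, hb, ← hE]; ring
  -- integral of the bound
  have hderiv : ∀ s : ℝ, HasDerivAt (fun s => Real.exp (c + b * s) / b)
      (Real.exp (c + b * s)) s := by
    intro s
    have h1 : HasDerivAt (fun s : ℝ => c + b * s) b s := by
      simpa using ((hasDerivAt_id s).const_mul b).const_add c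
    have h3 := ((Real.hasDerivAt_exp (c + b * s)).comp s h1).div_const b
    simpa [mul_div_assoc, mul_div_cancel_right₀ _ hb0.ne'] using h3
  have hcont : Continuous fun s : ℝ => Real.exp (c + b * s) := by continuity
  have hint : (∫ s in (0:ℝ)..t, Real.exp (c + b * s))
      = Real.exp (c + b * t) / b - Real.exp (c + b * 0) / b :=
    intervalIntegral.integral_eq_sub_of_hasDerivAt (fun s _ => hderiv s)
      (hcont.intervalIntegrable 0 t)
  have hgint : IntervalIntegrable
      (fun s => |ξ| * μ ξ * Real.exp (c + b * s)) volume 0 t :=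
    Continuous.intervalIntegrable (by continuity) 0 t
  have hI := intervalIntegral.norm_integral_le_abs_of_norm_le
    (f := fun s => Complex.exp (((t - s : ℝ) : ℂ) *
          (Complex.I * (a : ℂ) * (ξ : ℂ) - ((m : ℝ) : ℂ) * ((|ξ| : ℝ) : ℂ))) *
        (Complex.I * (ξ : ℂ)) * Fhat ξ s)
    (μ := volume) (a := 0) (b := t)
    (ae_restrict_of_forall_mem measurableSet_uIoc hnorm) hgint
  rw [intervalIntegral.integral_const_mul, hint] at hI
  have hdiffnn : 0 ≤ Real.exp (c + b * t) / b - Real.exp (c + b * 0) / b := by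
    rw [div_sub_div_same]
    apply div_nonneg _ hb0.le
    have : c + b * 0 ≤ c + b * t := by nlinarith
    linarith [Real.exp_le_exp.2 this]
  have habs : |(|ξ| * μ ξ * (Real.exp (c + b * t) / b - Real.exp (c + b * 0) / b))|
      = |ξ| * μ ξ * (Real.exp (c + b * t) / b - Real.exp (c + b * 0) / b) :=
    abs_of_nonneg (mul_nonneg (by positivity) hdiffnn)
  rw [habs] at hI
  have hval : |ξ| * μ ξ * (Real.exp (c + b * t) / b - Real.exp (c + b * 0) / b)
      ≤ |ξ| * μ ξ * (Real.exp (c + b * t) / b) := by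
    apply mul_le_mul_of_nonneg_left _ (by positivity)
    have := (Real.exp_pos (c + b * 0)).le
    have hpos : 0 ≤ Real.exp (c + b * 0) / b := by positivity
    linarith
  have key : Real.exp (α * t * |ξ|) * (|ξ| * μ ξ * (Real.exp (c + b * t) / b))
      = μ ξ / (m - α) := by
    have hcb : c + b * t = -(α * t * |ξ|) := by rw [hc, hb]; ring
    rw [hcb, Real.exp_neg, hb]
    field_simp
  calc Real.exp (α * t * |ξ|) *
      ‖∫ s in (0:ℝ)..t, Complex.exp (((t - s : ℝ) : ℂ) *
          (Complex.I * (a : ℂ) * (ξ : ℂ) - ((m : ℝ) : ℂ) * ((|ξ| : ℝ) : ℂ))) *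
        (Complex.I * (ξ : ℂ)) * Fhat ξ s‖
      ≤ Real.exp (α * t * |ξ|) *
        (|ξ| * μ ξ * (Real.exp (c + b * t) / b - Real.exp (c + b * 0) / b)) :=
        mul_le_mul_of_nonneg_left hI (Real.exp_pos _).le
    _ ≤ Real.exp (α * t * |ξ|) * (|ξ| * μ ξ * (Real.exp (c + b * t) / b)) :=
        mul_le_mul_of_nonneg_left hval (Real.exp_pos _).le
    _ = μ ξ / (m - α) := key
    _ ≤ μ ξ / (r / 2) := div_le_div_of_nonneg_left hμ0 (by positivity) hmα
    _ = 2 / r * μ ξ := by field_simp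
end

section
/- Suppose u(·,t) satisfies e^{αt|ξ|}|û(ξ,t)| ≤ μ(ξ) for all t ≥ 0 with α > 0 and μ a finite positive measure with μ({0}) = 0. Then ‖u(·,t)‖_{L^∞(ℝ)} → 0 as t → ∞. -/
open MeasureTheory Complex Real

/-- If `û(·,t)` is dominated by `e^{-αt|ξ|}μ` with `α > 0` and `μ` a finite positive measure with
no atom at `0` (i.e. `u(x,t) = ∫ g(ξ,t)e^{ixξ} dμ(ξ)` with `|g(ξ,t)| ≤ e^{-αt|ξ|}`), then
`‖u(·,t)‖_{L^∞}` tends to `0` as `t → ∞`. -/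
theorem stmt18 (α : ℝ) (hα : 0 < α) (μ : Measure ℝ) [IsFiniteMeasure μ] (hμ0 : μ {0} = 0)
    (u : ℝ → ℝ → ℂ) (gd : ℝ → ℝ → ℂ)
    (hrep : ∀ t : ℝ, 0 ≤ t → ∀ x : ℝ,
      u x t = ∫ ξ : ℝ, gd ξ t * Complex.exp (Complex.I * x * ξ) ∂μ)
    (hbd : ∀ ξ t : ℝ, 0 ≤ t → ‖gd ξ t‖ ≤ Real.exp (-(α * t * |ξ|))) :
    ∀ ε > 0, ∃ T : ℝ, ∀ t ≥ T, ∀ x : ℝ, ‖u x t‖ ≤ ε := by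
  intro ε hε
  -- a.e. ξ ≠ 0
  have hae : ∀ᵐ ξ ∂μ, ξ ≠ (0 : ℝ) := by
    rw [MeasureTheory.ae_iff]
    convert hμ0 using 2
    ext ξ; simp
  -- the dominating integral tends to 0
  have hF : Filter.Tendsto (fun t : ℝ => ∫ ξ, Real.exp (-(α * t * |ξ|)) ∂μ)
      Filter.atTop (nhds 0) := by
    have h0 : (0 : ℝ) = ∫ ξ : ℝ, (0 : ℝ) ∂μ := by simp
    rw [h0]
    apply MeasureTheory.tendsto_integral_filter_of_dominated_convergence
      (bound := fun _ => (1 : ℝ))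
    · filter_upwards with t
      exact (Continuous.aestronglyMeasurable (by fun_prop))
    · filter_upwards [Filter.eventually_ge_atTop (0 : ℝ)] with t ht
      filter_upwards with ξ
      rw [Real.norm_eq_abs, abs_of_pos (Real.exp_pos _)]
      apply Real.exp_le_one_iff.mpr
      simp only [neg_nonpos]
      positivity
    · exact integrable_const 1
    · filter_upwards [hae] with ξ hξ
      have hpos : 0 < α * |ξ| := by positivity
      have h1 : Filter.Tendsto (fun t : ℝ => α * |ξ| * t) Filter.atTop Filter.atTop :=
        Filter.Tendsto.const_mul_atTop hpos Filter.tendsto_id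
      have : Filter.Tendsto (fun t : ℝ => Real.exp (-(α * |ξ| * t)))
          Filter.atTop (nhds 0) :=
        Real.tendsto_exp_atBot.comp (Filter.tendsto_neg_atBot_iff.mpr h1)
      convert this using 2 with t
      ring_nf
  -- extract T
  have hev : ∀ᶠ t : ℝ in Filter.atTop,
      (∫ ξ, Real.exp (-(α * t * |ξ|)) ∂μ) ≤ ε ∧ 0 ≤ t := by
    filter_upwards [hF.eventually_lt_const hε,
      Filter.eventually_ge_atTop (0 : ℝ)] with t h1 h2
    exact ⟨h1.le, h2⟩
  obtain ⟨T, hT⟩ := hev.exists_forall_of_atTop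
  refine ⟨T, fun t ht x => ?_⟩
  obtain ⟨hint, ht0⟩ := hT t ht
  rw [hrep t ht0 x]
  calc ‖∫ ξ : ℝ, gd ξ t * Complex.exp (Complex.I * x * ξ) ∂μ‖
      ≤ ∫ ξ : ℝ, ‖gd ξ t * Complex.exp (Complex.I * x * ξ)‖ ∂μ :=
        MeasureTheory.norm_integral_le_integral_norm _
    _ ≤ ∫ ξ, Real.exp (-(α * t * |ξ|)) ∂μ := by
        apply MeasureTheory.integral_mono_of_nonneg
        · filter_upwards with ξ; positivity
        · apply MeasureTheory.Integrable.mono' (integrable_const (1 : ℝ))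
          · exact Continuous.aestronglyMeasurable (by fun_prop)
          · filter_upwards with ξ
            rw [Real.norm_eq_abs, abs_of_pos (Real.exp_pos _)]
            apply Real.exp_le_one_iff.mpr
            simp only [neg_nonpos]
            positivity
        · filter_upwards with ξ
          rw [norm_mul]
          have : ‖Complex.exp (Complex.I * x * ξ)‖ = 1 := by
            rw [Complex.norm_exp]
            have : (Complex.I * x * ξ).re = 0 := by simp
            rw [this, Real.exp_zero]
          rw [this, mul_one]
          exact hbd ξ t ht0
    _ ≤ ε := hint
end
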